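/- Let q be a prime power, p = char F_q, and let z be transcendental over F_p. Write x^2 + x - z = (x - r_1)(x - r_2) with r_1, r_2 in an algebraic closure of F_p(z). Then ∑_{0 ≤ l ≤ q/2} C(-l, l) z^l = -(r_1^{q+1} - r_2^{q+1})/(r_1 - r_2). -/

import Mathlib

open Finset

section Wdef

variable {K : Type*} [CommRing K]

/-- The Fibonacci-like polynomial `∑_k C(m-k, k) z^k`. -/
noncomputable def Wfib (z : K) (m : ℕ) : K :=
  ∑ k ∈ Finset.range (m + 1), (((m - k).choose k : ℕ) : K) * z ^ k

lemma Wfib_rec (z : K) (m : ℕ) : Wfib z (m + 2) = Wfib z (m + 1) + z * Wfib z m := by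
  unfold Wfib
  rw [Finset.mul_sum]
  rw [Finset.sum_range_succ' (fun k => (((m + 2 - k).choose k : ℕ) : K) * z ^ k) (m + 2),
    Finset.sum_range_succ' (fun k => (((m + 1 - k).choose k : ℕ) : K) * z ^ k) (m + 1),
    Finset.sum_range_succ (fun k => (((m + 2 - (k + 1)).choose (k + 1) : ℕ) : K) * z ^ (k + 1)) (m + 1)]
  have h1 : (((m + 2 - (m + 1 + 1)).choose (m + 1 + 1) : ℕ) : K) * z ^ (m + 1 + 1) = 0 := by
    have e : m + 2 - (m + 1 + 1) = 0 := by omega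
    rw [e, Nat.choose_eq_zero_of_lt (by omega)]
    simp
  rw [h1]
  have h2 : ∀ k ∈ Finset.range (m + 1),
      (((m + 2 - (k + 1)).choose (k + 1) : ℕ) : K) * z ^ (k + 1)
        = (((m + 1 - (k + 1)).choose (k + 1) : ℕ) : K) * z ^ (k + 1)
          + z * ((((m - k).choose k : ℕ) : K) * z ^ k) := by
    intro k hk
    rw [Finset.mem_range] at hk
    have e1 : m + 2 - (k + 1) = (m - k) + 1 := by omega
    have e2 : m + 1 - (k + 1) = m - k := by omega
    rw [e1, e2, Nat.choose_succ_succ]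
    push_cast
    ring
  rw [Finset.sum_congr rfl h2, Finset.sum_add_distrib]
  simp [Nat.choose_zero_right]
  ring

lemma Wfib_pow (z r₁ r₂ : K) (hsum : r₁ + r₂ = -1) (hprod : r₁ * r₂ = -z) :
    ∀ m, r₁ ^ (m + 1) - r₂ ^ (m + 1) = (r₁ - r₂) * ((-1) ^ m * Wfib z m) := by
  intro m
  induction m using Nat.twoStepInduction with
  | zero => simp [Wfib]
  | one =>
      have h : Wfib z 1 = 1 := by simp [Wfib, Finset.sum_range_succ]
      rw [h]
      linear_combination (r₁ - r₂) * hsum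
  | more m ih1 ih2 =>
      rw [Wfib_rec]
      have e3 : m + 2 + 1 = m + 3 := rfl
      rw [e3]
      linear_combination (r₁ + r₂) * ih2 - r₁ * r₂ * ih1
        + ((r₁ - r₂) * (-1) ^ (m + 1) * Wfib z (m + 1)) * hsum
        - ((r₁ - r₂) * (-1) ^ m * Wfib z m) * hprod

end Wdef

lemma coeff_one_sub_X_pow (R : Type*) [CommRing R] (m k : ℕ) :
    (PowerSeries.coeff (R := R) k) ((1 - PowerSeries.X : PowerSeries R) ^ m)
      = (-1) ^ k * (m.choose k : R) := by
  have hexp : (1 - PowerSeries.X : PowerSeries R) ^ m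
      = ∑ j ∈ Finset.range (m + 1),
          PowerSeries.C (R := R) ((-1) ^ j * (m.choose j : R)) * (PowerSeries.X : PowerSeries R) ^ j := by
    rw [sub_eq_add_neg, add_comm, add_pow]
    refine Finset.sum_congr rfl fun j hj => ?_
    rw [map_mul, map_pow, map_neg, map_one, map_natCast]
    ring
  rw [hexp, map_sum]
  simp only [PowerSeries.coeff_C_mul_X_pow]
  rw [Finset.sum_ite_eq (Finset.range (m + 1)) k]
  by_cases hk : k ≤ m
  · rw [if_pos (Finset.mem_range.mpr (by omega))]
  · rw [if_neg (by rw [Finset.mem_range]; omega)]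
    rw [Nat.choose_eq_zero_of_lt (by omega)]
    simp

lemma lemA (p : ℕ) [Fact p.Prime] (n k : ℕ) (hk : k < p ^ n) :
    (((p ^ n - k).choose k : ℕ) : ZMod p) = (-1) ^ k * ((2 * k - 1).choose k : ℕ) := by
  rcases Nat.eq_zero_or_pos k with rfl | hkpos
  · simp
  haveI : CharP (PowerSeries (ZMod p)) p :=
    charP_of_injective_ringHom (f := (PowerSeries.C (R := ZMod p))) PowerSeries.C_injective p
  set S : PowerSeries (ZMod p) := (PowerSeries.invOneSubPow (ZMod p) k).val with hS
  have hunit : (1 - PowerSeries.X : PowerSeries (ZMod p)) ^ k * S = 1 := by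
    rw [hS, ← PowerSeries.invOneSubPow_inv_eq_one_sub_pow]
    exact (PowerSeries.invOneSubPow (ZMod p) k).inv_val
  have hfrob : (1 - PowerSeries.X : PowerSeries (ZMod p)) ^ p ^ n
      = 1 - PowerSeries.X ^ p ^ n := by
    rw [sub_pow_char_pow, one_pow]
  have key : (1 - PowerSeries.X : PowerSeries (ZMod p)) ^ (p ^ n - k)
      = (1 - PowerSeries.X ^ p ^ n) * S := by
    calc (1 - PowerSeries.X : PowerSeries (ZMod p)) ^ (p ^ n - k)
        = (1 - PowerSeries.X) ^ (p ^ n - k) * ((1 - PowerSeries.X) ^ k * S) := by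
          rw [hunit, mul_one]
      _ = (1 - PowerSeries.X) ^ p ^ n * S := by
          rw [← mul_assoc, ← pow_add]
          congr 2
          omega
      _ = (1 - PowerSeries.X ^ p ^ n) * S := by rw [hfrob]
  have hco := congrArg (PowerSeries.coeff (R := ZMod p) k) key
  rw [coeff_one_sub_X_pow] at hco
  rw [sub_mul, one_mul, map_sub, PowerSeries.coeff_X_pow_mul'] at hco
  rw [if_neg (by omega), sub_zero] at hco
  have hSc : (PowerSeries.coeff (R := ZMod p) k) S = ((2 * k - 1).choose k : ZMod p) := by
    rw [hS, PowerSeries.invOneSubPow_val_eq_mk_sub_one_add_choose_of_pos _ _ hkpos,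
      PowerSeries.coeff_mk]
    have h : (k - 1 + k).choose (k - 1) = (2 * k - 1).choose k := by
      have e : k - 1 + k = 2 * k - 1 := by omega
      have e2 : k - 1 = (2 * k - 1) - k := by omega
      rw [e, e2]
      exact Nat.choose_symm (by omega)
    rw [h]
  rw [hSc] at hco
  have h2 := congrArg (fun x => ((-1) ^ k : ZMod p) * x) hco
  rw [← mul_assoc, ← pow_add] at h2
  have heven : ((-1 : ZMod p)) ^ (k + k) = 1 := Even.neg_one_pow ⟨k, rfl⟩
  rw [heven, one_mul] at h2
  exact h2

lemma intCast_eq_of_zmod {K : Type*} [Ring K] (p : ℕ) [Fact p.Prime] [CharP K p]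
    (a b : ℤ) (h : ((a : ZMod p) = (b : ZMod p))) : (a : K) = (b : K) := by
  have h0 : ((a - b : ℤ) : ZMod p) = 0 := by push_cast; rw [h]; ring
  have hdvd : (p : ℤ) ∣ (a - b) := (ZMod.intCast_zmod_eq_zero_iff_dvd _ p).mp h0
  have h1 : ((a - b : ℤ) : K) = 0 := (CharP.intCast_eq_zero_iff K p _).mpr hdvd
  push_cast at h1
  exact sub_eq_zero.mp h1

/-- Let `q = pⁿ` and `z` transcendental over `F_p` (realized as the image of `X`
in the algebraic closure of the rational function field `F_p(z)`). If
`x² + x - z = (x - r₁)(x - r₂)`, i.e. `r₁ + r₂ = -1` and `r₁ r₂ = -z`, then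
`∑_{0 ≤ l ≤ q/2} C(-l, l) zˡ = -(r₁^(q+1) - r₂^(q+1))/(r₁ - r₂)`. -/
theorem stmt_3 (p n q : ℕ) [Fact p.Prime] (hn : 0 < n) (hq : q = p ^ n)
    (z r₁ r₂ : AlgebraicClosure (RatFunc (ZMod p)))
    (hz : z = algebraMap (RatFunc (ZMod p)) (AlgebraicClosure (RatFunc (ZMod p))) RatFunc.X)
    (hsum : r₁ + r₂ = -1) (hprod : r₁ * r₂ = -z) (hne : r₁ ≠ r₂) :
    ∑ l ∈ Finset.range (q / 2 + 1),
        ((((-1) ^ l * ((2 * l - 1).choose l : ℤ) : ℤ) :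
            AlgebraicClosure (RatFunc (ZMod p))) * z ^ l)
      = -((r₁ ^ (q + 1) - r₂ ^ (q + 1)) / (r₁ - r₂)) := by
  haveI : CharP (RatFunc (ZMod p)) p :=
    charP_of_injective_algebraMap (algebraMap (ZMod p) (RatFunc (ZMod p))).injective p
  haveI hKp : CharP (AlgebraicClosure (RatFunc (ZMod p))) p :=
    charP_of_injective_algebraMap
      (algebraMap (RatFunc (ZMod p)) (AlgebraicClosure (RatFunc (ZMod p)))).injective p
  have hr : r₁ - r₂ ≠ 0 := sub_ne_zero.mpr hne
  have hqpos : 0 < q := by rw [hq]; exact pow_pos (Fact.out (p := p.Prime)).pos n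
  have step1 : ∀ l ∈ Finset.range (q / 2 + 1),
      ((((-1) ^ l * ((2 * l - 1).choose l : ℤ) : ℤ) : AlgebraicClosure (RatFunc (ZMod p))) * z ^ l)
        = (((q - l).choose l : ℕ) : AlgebraicClosure (RatFunc (ZMod p))) * z ^ l := by
    intro l hl
    rw [Finset.mem_range] at hl
    congr 1
    have hlq : l < p ^ n := by rw [← hq]; omega
    have hzz : ((((-1) ^ l * ((2 * l - 1).choose l : ℤ) : ℤ) : ℤ) : ZMod p)
        = ((((q - l).choose l : ℕ) : ℤ) : ZMod p) := by
      push_cast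
      rw [hq, lemA p n l hlq]
    have h3 := intCast_eq_of_zmod (K := AlgebraicClosure (RatFunc (ZMod p))) p _ _ hzz
    rw [h3]
    push_cast
    ring
  rw [Finset.sum_congr rfl step1]
  have step2 : ∑ l ∈ Finset.range (q / 2 + 1),
      (((q - l).choose l : ℕ) : AlgebraicClosure (RatFunc (ZMod p))) * z ^ l = Wfib z q := by
    unfold Wfib
    apply Finset.sum_subset
    · intro x hx
      rw [Finset.mem_range] at *
      omega
    · intro x hx hnx
      rw [Finset.mem_range] at hx hnx
      have hlt : q - x < x := by omega
      rw [Nat.choose_eq_zero_of_lt hlt]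
      simp
  rw [step2]
  have hcancel : (r₁ - r₂) * ((-1) ^ q * Wfib z q) / (r₁ - r₂) = (-1) ^ q * Wfib z q :=
    mul_div_cancel_left₀ _ hr
  rw [Wfib_pow z r₁ r₂ hsum hprod q, hcancel]
  have hneg : ((-1 : AlgebraicClosure (RatFunc (ZMod p)))) ^ q = -1 := by
    rw [hq]
    exact neg_one_pow_char_pow (AlgebraicClosure (RatFunc (ZMod p))) p n
  rw [hneg]
  ring
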